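/- Assume 0 ≤ d ≤ (n+m)/(4(n+m−1)) and set λ = (n+m−1)d/(n+m) (equivalently λ = d/(1+ρ)). Then the quadruple y_n = b_n − (n−1)λ, y_{n+m} = (n+1)λ − 2a_n − b_n, y_1 = 0, y_{n+1} = a_{n+m} − a_n is such that (λ, y) is a solution of the four-variable system (S); in particular λ = d/(1+ρ) is an eigenvalue of (S). -/

import Mathlib

open Finset

/-- The four-variable system (S), with variables `y1 = y_1`, `yn = y_n`,
`yn1 = y_{n+1}`, `ynm = y_{n+m}`. -/
def Ssol (n m : ℕ) (a : ℕ → ℝ) (lam y1 yn yn1 ynm : ℝ) : Prop :=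
  yn = min ((1 - (a n + a (n + m))) - 2 * lam + y1 + yn1 - ynm)
      ((∑ i ∈ Finset.Icc 1 (n - 1), a i) - ((n : ℝ) - 1) * lam + y1) ∧
  ynm = min ((1 - (a n + a (n + m))) - lam + y1 + yn1 - yn)
      ((∑ i ∈ Finset.Icc (n + 1) (n + m - 1), a i) - ((m : ℝ) - 1) * lam + yn1) ∧
  y1 = min (a n - lam + (yn + ynm) / 2)
      ((∑ i ∈ Finset.Icc 1 (n - 1), (1 - a i)) - ((n : ℝ) - 1) * lam + yn) ∧
  yn1 = min (a (n + m) - lam + (yn + ynm) / 2)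
      ((∑ i ∈ Finset.Icc (n + 1) (n + m - 1), (1 - a i)) - ((m : ℝ) - 1) * lam + ynm)

theorem stmt6 (n m : ℕ) (hn : 2 ≤ n) (hm : 2 ≤ m) (a : ℕ → ℝ)
    (ha : ∀ i : ℕ, 1 ≤ i → i ≤ n + m → 0 ≤ a i ∧ a i ≤ 1)
    (hprio : a n + a (n + m) ≤ 1)
    (d : ℝ) (hd : d = (∑ i ∈ Finset.Icc 1 (n + m), a i) / ((n : ℝ) + (m : ℝ) - 1))
    (hd0 : 0 ≤ d) (hd1 : d ≤ ((n : ℝ) + (m : ℝ)) / (4 * ((n : ℝ) + (m : ℝ) - 1)))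
    (lam : ℝ) (hlam : lam = ((n : ℝ) + (m : ℝ) - 1) * d / ((n : ℝ) + (m : ℝ))) :
    Ssol n m a lam 0
      ((∑ i ∈ Finset.Icc 1 (n - 1), a i) - ((n : ℝ) - 1) * lam)
      (a (n + m) - a n)
      (((n : ℝ) + 1) * lam - 2 * a n - (∑ i ∈ Finset.Icc 1 (n - 1), a i)) := by
  have hnR : (2:ℝ) ≤ (n:ℝ) := by exact_mod_cast hn
  have hmR : (2:ℝ) ≤ (m:ℝ) := by exact_mod_cast hm
  have hN1 : (0:ℝ) < (n:ℝ) + (m:ℝ) - 1 := by linarith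
  have hN0 : (0:ℝ) < (n:ℝ) + (m:ℝ) := by linarith
  set T : ℝ := ∑ i ∈ Finset.Icc 1 (n + m), a i with hTdef
  have hT : T = ((n:ℝ) + (m:ℝ) - 1) * d := by
    rw [hd]; field_simp
  have hlamT : ((n:ℝ) + (m:ℝ)) * lam = T := by
    rw [hlam, hT]; field_simp
  have hlam0 : 0 ≤ lam := by
    rw [hlam]
    apply div_nonneg _ (le_of_lt hN0)
    exact mul_nonneg (le_of_lt hN1) hd0
  have hlam4 : 4 * lam ≤ 1 := by
    have h1 : d * (4 * ((n:ℝ) + (m:ℝ) - 1)) ≤ (n:ℝ) + (m:ℝ) := by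
      rw [le_div_iff₀ (by positivity)] at hd1
      exact hd1
    have h2 : ((n:ℝ) + (m:ℝ) - 1) * d / ((n:ℝ) + (m:ℝ)) ≤ 1 / 4 := by
      rw [div_le_div_iff₀ hN0 (by norm_num)]
      nlinarith
    rw [hlam]; linarith
  -- splitting of the total sum
  set S1 : ℝ := ∑ i ∈ Finset.Icc 1 (n - 1), a i with hS1
  set S2 : ℝ := ∑ i ∈ Finset.Icc (n + 1) (n + m - 1), a i with hS2
  have hIcc : ∀ k : ℕ, Finset.Icc 1 k = Finset.Ioc 0 k := by
    intro k; rw [← Finset.Icc_add_one_left_eq_Ioc, Nat.zero_add]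
  have hsplit : T = S1 + a n + S2 + a (n + m) := by
    have e1 : (∑ i ∈ Finset.Ioc 0 (n - 1), a i) + ∑ i ∈ Finset.Ioc (n - 1) n, a i
        = ∑ i ∈ Finset.Ioc 0 n, a i :=
      Finset.sum_Ioc_consecutive _ (by omega) (by omega)
    have e2 : (∑ i ∈ Finset.Ioc 0 n, a i) + ∑ i ∈ Finset.Ioc n (n + m), a i
        = ∑ i ∈ Finset.Ioc 0 (n + m), a i :=
      Finset.sum_Ioc_consecutive _ (by omega) (by omega)
    have e3 : (∑ i ∈ Finset.Ioc n (n + m - 1), a i) + ∑ i ∈ Finset.Ioc (n + m - 1) (n + m), a i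
        = ∑ i ∈ Finset.Ioc n (n + m), a i :=
      Finset.sum_Ioc_consecutive _ (by omega) (by omega)
    have s1 : Finset.Ioc (n - 1) n = {n} := by
      rw [← Finset.Icc_add_one_left_eq_Ioc, show n - 1 + 1 = n from by omega, Finset.Icc_self]
    have s2 : Finset.Ioc (n + m - 1) (n + m) = {n + m} := by
      rw [← Finset.Icc_add_one_left_eq_Ioc, show n + m - 1 + 1 = n + m from by omega, Finset.Icc_self]
    have s3 : Finset.Ioc n (n + m - 1) = Finset.Icc (n + 1) (n + m - 1) := by
      rw [← Finset.Icc_add_one_left_eq_Ioc]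
    rw [hTdef, hIcc, hS1, hIcc, hS2, ← s3, ← e2, ← e1, ← e3, s1, s2,
      Finset.sum_singleton, Finset.sum_singleton]
    ring
  have hkey : ((n:ℝ) + (m:ℝ)) * lam = S1 + a n + S2 + a (n + m) := by
    rw [hlamT, hsplit]
  -- sums of (1 - a i)
  have hc1 : (∑ i ∈ Finset.Icc 1 (n - 1), (1 - a i)) = ((n:ℝ) - 1) - S1 := by
    rw [Finset.sum_sub_distrib, Finset.sum_const, Nat.card_Icc, nsmul_eq_mul, mul_one,
      show n - 1 + 1 - 1 = n - 1 from by omega, Nat.cast_sub (by omega : 1 ≤ n), Nat.cast_one,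
      hS1]
  have hc2 : (∑ i ∈ Finset.Icc (n + 1) (n + m - 1), (1 - a i)) = ((m:ℝ) - 1) - S2 := by
    rw [Finset.sum_sub_distrib, Finset.sum_const, Nat.card_Icc, nsmul_eq_mul, mul_one,
      show n + m - 1 + 1 - (n + 1) = m - 1 from by omega, Nat.cast_sub (by omega : 1 ≤ m),
      Nat.cast_one, hS2]
  have hp1 : (0:ℝ) ≤ ((n:ℝ) - 1) * (1 - 2 * lam) :=
    mul_nonneg (by linarith) (by linarith)
  have hp2 : (0:ℝ) ≤ ((m:ℝ) - 1) * (1 - 2 * lam) :=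
    mul_nonneg (by linarith) (by linarith)
  constructor
  · rw [min_eq_right (by linarith)]
    ring
  constructor
  · rw [min_eq_right (by linarith [hkey, hlam4, hlam0])]
    linarith [hkey, hlam4, hlam0]
  constructor
  · rw [hc1, min_eq_left (by linarith [hp1])]
    ring
  · rw [hc2, min_eq_left (by linarith [hp2, hkey])]
    ring
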